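/- Let δ ∈ ℂ with δ ≠ 1. Consider the germ of a holomorphic map f = (f₁, f₂) at 0 ∈ ℂ² of the form f₁(z) = z₁/(1+z₁) + z₂·g₁(z), f₂(z) = z₂·(δ + g₂(z)) where g₁, g₂ are convergent power series vanishing at the origin. Then the ideal 𝔞 = (z₁ − f₁(z), z₂ − f₂(z)) in the ring ℂ{z₁,z₂} of convergent power series equals (z₁², z₂), and hence dim_ℂ ℂ{z}/𝔞 = 2. -/

import Mathlib

open MvPowerSeries TrivSqZeroExt

noncomputable abbrev myR := MvPowerSeries (Fin 2) ℂ

lemma coeff_single_mul (f g : myR) :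
    MvPowerSeries.coeff (Finsupp.single 0 1) (f * g) =
      MvPowerSeries.coeff 0 f * MvPowerSeries.coeff (Finsupp.single 0 1) g +
      MvPowerSeries.coeff (Finsupp.single 0 1) f * MvPowerSeries.coeff 0 g := by
  rw [MvPowerSeries.coeff_mul, Finsupp.antidiagonal_single, Finset.sum_map]
  rw [show (Finset.HasAntidiagonal.antidiagonal 1 : Finset (ℕ × ℕ)) = {(0, 1), (1, 0)} from by decide]
  rw [Finset.sum_pair (by decide)]
  simp [MvPowerSeries.coeff_zero_eq_constantCoeff]

noncomputable def myPsi : myR →ₐ[ℂ] DualNumber ℂ where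
  toFun f := TrivSqZeroExt.inl (MvPowerSeries.coeff 0 f) +
    TrivSqZeroExt.inr (MvPowerSeries.coeff (Finsupp.single 0 1) f)
  map_one' := by
    apply TrivSqZeroExt.ext <;>
      simp [MvPowerSeries.coeff_one, Finsupp.single_eq_zero]
  map_mul' f g := by
    apply TrivSqZeroExt.ext
    · simp [MvPowerSeries.coeff_zero_eq_constantCoeff, map_mul]
    · simp [coeff_single_mul, smul_eq_mul, MulOpposite.op_smul, mul_comm]
  map_zero' := by apply TrivSqZeroExt.ext <;> simp
  map_add' f g := by apply TrivSqZeroExt.ext <;> simp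
  commutes' c := by
    apply TrivSqZeroExt.ext <;>
      simp [MvPowerSeries.algebraMap_apply, MvPowerSeries.coeff_C, Finsupp.single_eq_zero,
        TrivSqZeroExt.algebraMap_eq_inl']

lemma myPsi_surj : Function.Surjective myPsi := by
  intro x
  refine ⟨MvPowerSeries.C x.fst + MvPowerSeries.C x.snd * MvPowerSeries.X 0,
    ?_⟩
  have h : x = TrivSqZeroExt.inl x.fst + TrivSqZeroExt.inr x.snd :=
    (TrivSqZeroExt.inl_fst_add_inr_snd_eq x).symm
  rw [h]
  apply TrivSqZeroExt.ext <;>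
    simp [myPsi, MvPowerSeries.coeff_C, MvPowerSeries.coeff_X, Finsupp.single_eq_zero]

lemma single_ne : (Finsupp.single (0 : Fin 2) 1) ≠ Finsupp.single 1 1 := by
  intro h
  have := Finsupp.single_eq_single_iff _ _ _ _ |>.mp h
  simp at this

lemma myPsi_ker : RingHom.ker myPsi =
    Ideal.span {(MvPowerSeries.X 0 : myR) ^ 2, MvPowerSeries.X 1} := by
  ext f
  rw [RingHom.mem_ker]
  constructor
  · intro hf
    have h0 : MvPowerSeries.coeff 0 f = 0 := by
      have := congrArg TrivSqZeroExt.fst hf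
      simpa [myPsi] using this
    have h1 : MvPowerSeries.coeff (Finsupp.single 0 1) f = 0 := by
      have := congrArg TrivSqZeroExt.snd hf
      simpa [myPsi] using this
    -- decompose f
    set f₀ : myR := fun m => if m 1 = 0 then MvPowerSeries.coeff m f else 0 with hf₀
    have hc : ∀ m, MvPowerSeries.coeff m f₀ =
        if m 1 = 0 then MvPowerSeries.coeff m f else 0 := fun m => rfl
    have hd1 : (MvPowerSeries.X 1 : myR) ∣ (f - f₀) := by
      rw [MvPowerSeries.X_dvd_iff]
      intro m hm
      simp [map_sub, hc, hm]
    have hd0 : (MvPowerSeries.X 0 : myR) ^ 2 ∣ f₀ := by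
      rw [MvPowerSeries.X_pow_dvd_iff]
      intro m hm
      rw [hc]
      split_ifs with hm1
      · have hm' : m = Finsupp.single 0 (m 0) := by
          ext i
          fin_cases i
          · simp
          · simpa using hm1
        interval_cases h : m 0
        · rw [hm']; simpa using h0
        · rw [hm']; exact h1
      · rfl
    obtain ⟨a, ha⟩ := hd0
    obtain ⟨b, hb⟩ := hd1
    rw [Ideal.mem_span_pair]
    exact ⟨a, b, by linear_combination ha.symm + hb.symm⟩
  · intro hf
    rw [Ideal.mem_span_pair] at hf
    obtain ⟨a, b, hab⟩ := hf
    have hX0 : myPsi (MvPowerSeries.X 0) = TrivSqZeroExt.inr 1 := by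
      apply TrivSqZeroExt.ext <;>
        simp [myPsi, MvPowerSeries.coeff_X, Finsupp.single_eq_zero]
    have hX1 : myPsi (MvPowerSeries.X 1) = 0 := by
      apply TrivSqZeroExt.ext <;>
        simp [myPsi, MvPowerSeries.coeff_X, single_ne,
          (Finsupp.single_eq_zero (a := (1 : Fin 2)) (b := (1 : ℕ)))]
    rw [← hab]
    rw [map_add, map_mul, map_mul, map_pow, hX0, hX1, mul_zero]
    rw [show (TrivSqZeroExt.inr 1 : DualNumber ℂ) ^ 2 = 0 by
      rw [sq, TrivSqZeroExt.inr_mul_inr]]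
    simp

noncomputable def dualEquivProd : DualNumber ℂ ≃ₗ[ℂ] ℂ × ℂ where
  toFun x := (x.fst, x.snd)
  invFun p := TrivSqZeroExt.inl p.1 + TrivSqZeroExt.inr p.2
  map_add' x y := by simp
  map_smul' c x := by simp
  left_inv x := TrivSqZeroExt.inl_fst_add_inr_snd_eq x
  right_inv p := by simp

lemma aux_finrank :
    Module.finrank ℂ
      (myR ⧸ Ideal.span {(MvPowerSeries.X 0 : myR) ^ 2, MvPowerSeries.X 1}) = 2 := by
  rw [← myPsi_ker]
  have e := (Ideal.quotientKerAlgEquivOfSurjective myPsi_surj).toLinearEquiv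
  rw [e.finrank_eq, dualEquivProd.finrank_eq]
  simp

/-- An exceptional fixed point of type I: for the germ
f₁(z) = z₁/(1+z₁) + z₂·g₁(z), f₂(z) = z₂·(δ + g₂(z)) with g₁, g₂ vanishing at the
origin and δ ≠ 1, the ideal (z₁ − f₁, z₂ − f₂) in the power series ring equals
(z₁², z₂), and hence the quotient has dimension 2 over ℂ. -/
theorem stmt8 (δ : ℂ) (hδ : δ ≠ 1)
    (g₁ g₂ : MvPowerSeries (Fin 2) ℂ)
    (hg₁ : MvPowerSeries.constantCoeff g₁ = 0)
    (hg₂ : MvPowerSeries.constantCoeff g₂ = 0)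
    (z₁ z₂ f₁ f₂ : MvPowerSeries (Fin 2) ℂ)
    (hz₁ : z₁ = MvPowerSeries.X 0) (hz₂ : z₂ = MvPowerSeries.X 1)
    (hf₁ : f₁ = z₁ * (1 + z₁)⁻¹ + z₂ * g₁)
    (hf₂ : f₂ = z₂ * (MvPowerSeries.C δ + g₂)) :
    Ideal.span {z₁ - f₁, z₂ - f₂} = Ideal.span {z₁ ^ 2, z₂} ∧
      Module.finrank ℂ
        (MvPowerSeries (Fin 2) ℂ ⧸ Ideal.span {z₁ - f₁, z₂ - f₂}) = 2 := by
  set u : myR := (1 + z₁)⁻¹ with hu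
  have hcu : MvPowerSeries.constantCoeff (1 + z₁) ≠ 0 := by
    rw [hz₁]; simp
  have h1 : (1 + z₁) * u = 1 := MvPowerSeries.mul_inv_cancel _ hcu
  set w : myR := 1 - MvPowerSeries.C δ - g₂ with hwdef
  have hcw : MvPowerSeries.constantCoeff w ≠ 0 := by
    rw [hwdef]
    simp [hg₂, MvPowerSeries.constantCoeff_C, sub_ne_zero]
    exact fun h => hδ h.symm
  have hw : w * w⁻¹ = 1 := MvPowerSeries.mul_inv_cancel _ hcw
  have hA1 : z₁ - f₁ = z₁ ^ 2 * u - z₂ * g₁ := by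
    rw [hf₁]; linear_combination -z₁ * h1
  have hA2 : z₂ - f₂ = z₂ * w := by
    rw [hf₂, hwdef]; ring
  have hspan : Ideal.span {z₁ - f₁, z₂ - f₂} = Ideal.span {z₁ ^ 2, z₂} := by
    apply le_antisymm
    · rw [Ideal.span_le]
      intro x hx
      simp only [Set.mem_insert_iff, Set.mem_singleton_iff] at hx
      rw [SetLike.mem_coe, Ideal.mem_span_pair]
      obtain h | h := hx
      · exact ⟨u, -g₁, by rw [h, hA1]; ring⟩
      · exact ⟨0, w, by rw [h, hA2]; ring⟩
    · rw [Ideal.span_le]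
      intro x hx
      simp only [Set.mem_insert_iff, Set.mem_singleton_iff] at hx
      rw [SetLike.mem_coe, Ideal.mem_span_pair]
      obtain h | h := hx
      · refine ⟨1 + z₁, g₁ * (1 + z₁) * w⁻¹, ?_⟩
        rw [h, hA1, hA2]
        linear_combination z₁ ^ 2 * h1 + (1 + z₁) * z₂ * g₁ * hw
      · refine ⟨0, w⁻¹, ?_⟩
        rw [h, hA2]
        linear_combination z₂ * hw
  refine ⟨hspan, ?_⟩
  rw [hspan, hz₁, hz₂]
  exact aux_finrank
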